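/- Let Γ be a pre-automatic structure over a finite alphabet A and let ι : A → L be an assignment of generators for Γ. If σ : A⁺ → S and τ : A⁺ → T are interpretations of Γ that are both consistent with ι, then there exists a semigroup isomorphism ρ : S → T with ρ(σ(w)) = τ(w) for every word w ∈ A⁺; that is, an assignment of generators is consistent with a unique interpretation up to isomorphic permutation of the semigroup described. -/
import Mathlib


universe u v

/-- A pre-automatic structure over an alphabet `A`: a language `L` of nonempty words
(elements of the free semigroup `A⁺`), a relation `L₌ ⊆ L × L`, and for each letter
`a ∈ A` a relation `Lₐ ⊆ L × L`. -/
structure PreAutomaticStructure (A : Type u) where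
  L : Set (FreeSemigroup A)
  Leq : Set (FreeSemigroup A × FreeSemigroup A)
  Lletter : A → Set (FreeSemigroup A × FreeSemigroup A)
  Leq_sub : Leq ⊆ L ×ˢ L
  Lletter_sub : ∀ a, Lletter a ⊆ L ×ˢ L

/-- An interpretation of a pre-automatic structure with respect to a semigroup `S`:
a semigroup homomorphism `σ : A⁺ → S` such that (i) `σ(L) = S`, (ii) `L₌` captures
equality of representatives, (iii) `Lₐ` captures right multiplication by `a`. -/
structure IsInterpretation {A : Type u} {S : Type v} [Semigroup S]
    (Γ : PreAutomaticStructure A) (σ : FreeSemigroup A →ₙ* S) : Prop where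
  surj : ⇑σ '' Γ.L = Set.univ
  eq_iff : ∀ u ∈ Γ.L, ∀ v ∈ Γ.L, ((u, v) ∈ Γ.Leq ↔ σ u = σ v)
  step_iff : ∀ (a : A), ∀ u ∈ Γ.L, ∀ v ∈ Γ.L,
    ((u, v) ∈ Γ.Lletter a ↔ σ (u * FreeSemigroup.of a) = σ v)

/-- `σ` is consistent with the assignment of generators `ι : A → L`. -/
def ConsistentWith {A : Type u} {S : Type v} [Semigroup S] (Γ : PreAutomaticStructure A)
    (σ : FreeSemigroup A →ₙ* S) (ι : A → FreeSemigroup A) : Prop :=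
  (∀ a, ι a ∈ Γ.L) ∧ ∀ a, σ (ι a) = σ (FreeSemigroup.of a)

/-- `ι : A → L` is an assignment of generators: some interpretation is consistent with it. -/
def IsAssignment {A : Type u} (Γ : PreAutomaticStructure A)
    (ι : A → FreeSemigroup A) : Prop :=
  ∃ (T : Type v) (inst : Semigroup T)
    (τ : @MulHom (FreeSemigroup A) T _ inst.toMul),
    @IsInterpretation A T inst Γ τ ∧ @ConsistentWith A T inst Γ τ ι

/-- Composition of relations: `(u, v) ∈ R ∘ R'` iff `∃ x, (u, x) ∈ R ∧ (x, v) ∈ R'`. -/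
def relComp {W : Type*} (R R' : Set (W × W)) : Set (W × W) :=
  {p | ∃ x, (p.1, x) ∈ R ∧ (x, p.2) ∈ R'}

/-- The inverse of a relation. -/
def relInv {W : Type*} (R : Set (W × W)) : Set (W × W) := {p | (p.2, p.1) ∈ R}

/-- `L_w` for a word `w` given as a list of letters: `L_ε = L₌` and
`L_{a₁⋯aₙ} = L_{a₁} ∘ ⋯ ∘ L_{aₙ}`. -/
def PreAutomaticStructure.LwordList {A : Type u} (Γ : PreAutomaticStructure A) :
    List A → Set (FreeSemigroup A × FreeSemigroup A)
  | [] => Γ.Leq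
  | [a] => Γ.Lletter a
  | a :: b :: rest => relComp (Γ.Lletter a) (Γ.LwordList (b :: rest))

/-- `L_w` for a nonempty word `w ∈ A⁺`. -/
def PreAutomaticStructure.Lword {A : Type u} (Γ : PreAutomaticStructure A)
    (w : FreeSemigroup A) : Set (FreeSemigroup A × FreeSemigroup A) :=
  Γ.LwordList (w.head :: w.tail)

/-- Two interpretations consistent with the same assignment of generators are related by
a semigroup isomorphism `ρ` with `ρ(σ(w)) = τ(w)` for every word `w ∈ A⁺`. -/
theorem stmt_1 {A : Type*} [Finite A] {S T : Type*} [Semigroup S] [Semigroup T]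
    (Γ : PreAutomaticStructure A) (ι : A → FreeSemigroup A)
    (σ : FreeSemigroup A →ₙ* S) (τ : FreeSemigroup A →ₙ* T)
    (hσ : IsInterpretation Γ σ) (hτ : IsInterpretation Γ τ)
    (hσι : ConsistentWith Γ σ ι) (hτι : ConsistentWith Γ τ ι) :
    ∃ ρ : S ≃* T, ∀ w : FreeSemigroup A, ρ (σ w) = τ w := by
  classical
  obtain ⟨hLσ, hgenσ⟩ := hσι
  obtain ⟨hLτ, hgenτ⟩ := hτι
  have lemA : ∀ w : FreeSemigroup A, ∀ u ∈ Γ.L,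
      ∃ u' ∈ Γ.L, σ (u * w) = σ u' ∧ τ (u * w) = τ u' := by
    intro w
    induction w using FreeSemigroup.recOnMul with
    | ih1 a =>
      intro u hu
      have hs : σ (u * FreeSemigroup.of a) ∈ Set.univ := trivial
      rw [← hσ.surj] at hs
      obtain ⟨u', hu', hσu'⟩ := hs
      refine ⟨u', hu', hσu'.symm, ?_⟩
      have h1 : (u, u') ∈ Γ.Lletter a := (hσ.step_iff a u hu u' hu').2 hσu'.symm
      exact (hτ.step_iff a u hu u' hu').1 h1
    | ih2 x y ihx ihy =>
      intro u hu
      obtain ⟨u₁, hu₁, hσ1, hτ1⟩ := ihx u hu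
      obtain ⟨u', hu', hσ2, hτ2⟩ := ihy u₁ hu₁
      refine ⟨u', hu', ?_, ?_⟩
      · rw [← mul_assoc, map_mul, hσ1, ← map_mul, hσ2]
      · rw [← mul_assoc, map_mul, hτ1, ← map_mul, hτ2]
  have lemB : ∀ w : FreeSemigroup A, ∃ u ∈ Γ.L, σ w = σ u ∧ τ w = τ u := by
    intro w
    induction w using FreeSemigroup.recOnMul with
    | ih1 a => exact ⟨ι a, hLσ a, (hgenσ a).symm, (hgenτ a).symm⟩
    | ih2 x y ihx ihy =>
      obtain ⟨u, hu, hσu, hτu⟩ := ihx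
      obtain ⟨u', hu', h1, h2⟩ := lemA y u hu
      exact ⟨u', hu', by rw [map_mul, hσu, ← map_mul, h1],
        by rw [map_mul, hτu, ← map_mul, h2]⟩
  have key : ∀ w w' : FreeSemigroup A, σ w = σ w' ↔ τ w = τ w' := by
    intro w w'
    obtain ⟨u, hu, hσu, hτu⟩ := lemB w
    obtain ⟨u', hu', hσu', hτu'⟩ := lemB w'
    rw [hσu, hσu', hτu, hτu', ← hσ.eq_iff u hu u' hu', ← hτ.eq_iff u hu u' hu']
  have hσsurj : Function.Surjective σ := by
    intro s
    have hs : s ∈ Set.univ := trivial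
    rw [← hσ.surj] at hs
    obtain ⟨u, _, h⟩ := hs
    exact ⟨u, h⟩
  have hτsurj : Function.Surjective τ := by
    intro t
    have ht : t ∈ Set.univ := trivial
    rw [← hτ.surj] at ht
    obtain ⟨u, _, h⟩ := ht
    exact ⟨u, h⟩
  choose g hg using hσsurj
  have hf : ∀ w : FreeSemigroup A, τ (g (σ w)) = τ w := fun w => (key _ _).1 (hg (σ w))
  let f : S →ₙ* T :=
    { toFun := fun s => τ (g s)
      map_mul' := by
        intro s t
        have h1 : σ (g (s * t)) = σ (g s * g t) := by rw [map_mul, hg, hg, hg]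
        calc τ (g (s * t)) = τ (g s * g t) := (key _ _).1 h1
          _ = τ (g s) * τ (g t) := map_mul τ _ _ }
  have hbij : Function.Bijective f := by
    constructor
    · intro s s' h
      have : σ (g s) = σ (g s') := (key _ _).2 h
      rw [hg, hg] at this
      exact this
    · intro t
      obtain ⟨w, rfl⟩ := hτsurj t
      exact ⟨σ w, hf w⟩
  exact ⟨MulEquiv.ofBijective f hbij, fun w => hf w⟩
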